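/- Let α ∈ (0,1) and T > 0. Let ν_{s,u} denote the law of (ρ_s, ρ_u) for a standard symmetric α-stable Lévy process ρ on ℝ, so that its characteristic function satisfies |ν̂_{s,u}(z, z′)| = exp(−(s∧u)|z + z′|^α − |s − u| |z′ 1_{u>s} + z 1_{s>u}|^α) for s ≠ u. Then there exists C(T) > 0 such that for all z, z′ ∈ ℝ: ∫_0^T ∫_0^T |ν̂_{s,u}(z, z′)| ds du ≤ C(T) (1/(1 + |z + z′|^α)) (1/(1 + |z|^α) + 1/(1 + |z′|^α)). -/

import Mathlib

open MeasureTheory Set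

set_option maxHeartbeats 1000000

private lemma expInt_le (T x p q : ℝ) (hT : 0 < T) (hx : 0 ≤ x) (hpq : p ≤ q) (hqT : q - p ≤ T) :
    ∫ t in Set.Ioc p q, Real.exp (-((t - p) * x)) ≤ (T + 1) / (1 + x) := by
  have h1x : (0:ℝ) < 1 + x := by linarith
  rw [← intervalIntegral.integral_of_le hpq]
  have hshift : (∫ t in p..q, Real.exp (-((t - p) * x)))
      = ∫ t in (0:ℝ)..(q - p), Real.exp (-(t * x)) := by
    have h := intervalIntegral.integral_comp_sub_right (a := p) (b := q)
      (fun t => Real.exp (-(t * x))) p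
    simpa using h
  rw [hshift]
  set L := q - p with hL
  have hL0 : 0 ≤ L := by linarith
  have hInt : ∀ a b : ℝ, IntervalIntegrable (fun t => Real.exp (-(t * x))) volume a b :=
    fun a b => (Real.continuous_exp.comp (by continuity)).intervalIntegrable a b
  rcases eq_or_lt_of_le hx with hx0 | hx0
  · simp only [← hx0, mul_zero, neg_zero, Real.exp_zero]
    rw [intervalIntegral.integral_const]
    simp only [smul_eq_mul, mul_one, sub_zero, add_zero]
    linarith
  · have hbound1 : (∫ t in (0:ℝ)..L, Real.exp (-(t * x))) ≤ L := by
      calc (∫ t in (0:ℝ)..L, Real.exp (-(t * x)))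
          ≤ ∫ _t in (0:ℝ)..L, (1:ℝ) := by
            refine intervalIntegral.integral_mono_on hL0 (hInt 0 L)
              intervalIntegrable_const fun t ht => ?_
            rw [Real.exp_le_one_iff]
            nlinarith [ht.1]
        _ = L := by simp
    have hval : (∫ t in (0:ℝ)..L, Real.exp (-(t * x))) = (1 - Real.exp (-(L * x))) / x := by
      have hderiv : ∀ t ∈ Set.uIcc (0:ℝ) L,
          HasDerivAt (fun t => -(Real.exp (-(t * x)) / x)) (Real.exp (-(t * x))) t := by
        intro t _
        have h1 : HasDerivAt (fun t : ℝ => -(t * x)) (-x) t := by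
          have h := ((hasDerivAt_id' t).mul_const x).neg
          simp only [one_mul] at h
          exact h
        have h3 := (h1.exp.div_const x).neg
        refine h3.congr_deriv ?_
        field_simp
      rw [intervalIntegral.integral_eq_sub_of_hasDerivAt hderiv (hInt 0 L)]
      simp only [zero_mul, neg_zero, Real.exp_zero]
      field_simp
      ring
    by_cases hTx : T * x ≤ 1
    · refine hbound1.trans ?_
      rw [le_div_iff₀ h1x]
      nlinarith
    · rw [hval]
      have h1 : (1 - Real.exp (-(L * x))) / x ≤ 1 / x := by
        gcongr
        nlinarith [Real.exp_pos (-(L * x))]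
      refine h1.trans ?_
      rw [div_le_div_iff₀ hx0 h1x]
      nlinarith

/-- bound on `∫₀ᵀ∫₀ᵀ |ν̂_{s,u}(z,z′)| ds du` where `ν_{s,u}` is the law of
`(ρ_s, ρ_u)` for a standard symmetric `α`-stable process, so that
`|ν̂_{s,u}(z,z′)| = exp(−(s∧u)|z+z′|^α − |s−u||z′1_{u>s} + z1_{s>u}|^α)`. -/
theorem stmt16 (α : ℝ) (hα : α ∈ Set.Ioo (0:ℝ) 1) (T : ℝ) (hT : 0 < T)
    (ν : ℝ → ℝ → ℝ → ℝ → ℝ)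
    (hν : ∀ s u z z' : ℝ, s ≠ u →
      ν s u z z' = Real.exp (-(min s u) * |z + z'| ^ α
        - |s - u| * |(if s < u then z' else z)| ^ α)) :
    ∃ C : ℝ, 0 < C ∧ ∀ z z' : ℝ,
      ∫ s in Set.Ioc (0:ℝ) T, ∫ u in Set.Ioc (0:ℝ) T, |ν s u z z'|
        ≤ C * (1 / (1 + |z + z'| ^ α)) * (1 / (1 + |z| ^ α) + 1 / (1 + |z'| ^ α)) := by
  refine ⟨(T + 1) ^ 2, by positivity, fun z z' => ?_⟩
  set μ : Measure ℝ := volume.restrict (Set.Ioc (0:ℝ) T) with hμdef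
  set a := |z + z'| ^ α with ha
  set b := |z'| ^ α with hb
  set c := |z| ^ α with hc
  have ha0 : 0 ≤ a := Real.rpow_nonneg (abs_nonneg _) α
  have hb0 : 0 ≤ b := Real.rpow_nonneg (abs_nonneg _) α
  have hc0 : 0 ≤ c := Real.rpow_nonneg (abs_nonneg _) α
  set g : ℝ → ℝ → ℝ :=
    fun s u => Real.exp (-(min s u) * a - |s - u| * (if s < u then b else c)) with hg
  -- Step A: replace ν by g in the inner integral
  have hstepA : ∀ s, (∫ u in Set.Ioc (0:ℝ) T, |ν s u z z'|) = ∫ u in Set.Ioc (0:ℝ) T, g s u := by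
    intro s
    refine integral_congr_ae ?_
    have h0 : μ {s} = 0 := by
      refine le_antisymm ?_ zero_le
      calc μ {s} ≤ volume {s} := Measure.restrict_le_self _
        _ = 0 := Real.volume_singleton
    have hae : ∀ᵐ u ∂μ, u ≠ s := by
      rw [ae_iff]
      refine measure_mono_null (fun u hu => ?_) h0
      simpa using hu
    filter_upwards [hae] with u hu
    rw [hν s u z z' (Ne.symm hu), abs_of_pos (Real.exp_pos _)]
    rw [hg]
    congr 2
    split_ifs <;> rfl
  simp only [← hμdef] at hstepA
  simp only [hstepA]
  -- finite measure instance
  haveI hfin : IsFiniteMeasure μ := by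
    constructor
    rw [hμdef, Measure.restrict_apply_univ, Real.volume_Ioc]
    exact ENNReal.ofReal_lt_top
  -- indicator functions on the product space
  set S1 : Set (ℝ × ℝ) := {p : ℝ × ℝ | 0 < p.2 ∧ p.2 ≤ p.1} with hS1
  set F1 : ℝ × ℝ → ℝ :=
    S1.indicator (fun p => Real.exp (-(p.2 * a) - (p.1 - p.2) * c)) with hF1
  set S2 : Set (ℝ × ℝ) := {p : ℝ × ℝ | 0 < p.1 ∧ p.1 < p.2} with hS2
  set F2 : ℝ × ℝ → ℝ :=
    S2.indicator (fun p => Real.exp (-(p.1 * a) - (p.2 - p.1) * b)) with hF2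
  have hS1m : MeasurableSet S1 :=
    (measurableSet_lt measurable_const measurable_snd).inter
      (measurableSet_le measurable_snd measurable_fst)
  have hS2m : MeasurableSet S2 :=
    (measurableSet_lt measurable_const measurable_fst).inter
      (measurableSet_lt measurable_fst measurable_snd)
  have hF1m : Measurable F1 :=
    ((Real.continuous_exp.comp (by continuity)).measurable).indicator hS1m
  have hF2m : Measurable F2 :=
    ((Real.continuous_exp.comp (by continuity)).measurable).indicator hS2m
  have hF1le : ∀ p, ‖F1 p‖ ≤ 1 := by
    intro p
    rw [Real.norm_eq_abs]
    by_cases hp : p ∈ S1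
    · rw [hF1, Set.indicator_of_mem hp, abs_of_pos (Real.exp_pos _), Real.exp_le_one_iff]
      obtain ⟨h1, h2⟩ := hp
      nlinarith
    · simp [hF1, Set.indicator_of_notMem hp]
  have hF2le : ∀ p, ‖F2 p‖ ≤ 1 := by
    intro p
    rw [Real.norm_eq_abs]
    by_cases hp : p ∈ S2
    · rw [hF2, Set.indicator_of_mem hp, abs_of_pos (Real.exp_pos _), Real.exp_le_one_iff]
      obtain ⟨h1, h2⟩ := hp
      nlinarith
    · simp [hF2, Set.indicator_of_notMem hp]
  have hF1nn : ∀ p, 0 ≤ F1 p := fun p =>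
    Set.indicator_nonneg (fun q _ => (Real.exp_pos _).le) p
  have hF2nn : ∀ p, 0 ≤ F2 p := fun p =>
    Set.indicator_nonneg (fun q _ => (Real.exp_pos _).le) p
  have hint1 : Integrable F1 (μ.prod μ) :=
    (integrable_const (1:ℝ)).mono' hF1m.aestronglyMeasurable
      (Filter.Eventually.of_forall hF1le)
  have hint2 : Integrable F2 (μ.prod μ) :=
    (integrable_const (1:ℝ)).mono' hF2m.aestronglyMeasurable
      (Filter.Eventually.of_forall hF2le)
  have hslice1 : ∀ s, Integrable (fun u => F1 (s, u)) μ := fun s =>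
    (integrable_const (1:ℝ)).mono'
      ((hF1m.comp measurable_prodMk_left).aestronglyMeasurable)
      (Filter.Eventually.of_forall fun u => hF1le (s, u))
  have hslice2 : ∀ s, Integrable (fun u => F2 (s, u)) μ := fun s =>
    (integrable_const (1:ℝ)).mono'
      ((hF2m.comp measurable_prodMk_left).aestronglyMeasurable)
      (Filter.Eventually.of_forall fun u => hF2le (s, u))
  have hA_int : Integrable (fun s => ∫ u, F1 (s, u) ∂μ) μ := hint1.integral_prod_left
  have hB_int : Integrable (fun s => ∫ u, F2 (s, u) ∂μ) μ := hint2.integral_prod_left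
  -- splitting g into F1 + F2
  have hsplit : ∀ s ∈ Set.Ioc (0:ℝ) T,
      (∫ u, g s u ∂μ) = (∫ u, F1 (s, u) ∂μ) + ∫ u, F2 (s, u) ∂μ := by
    intro s hs
    rw [← integral_add (hslice1 s) (hslice2 s)]
    refine setIntegral_congr_fun measurableSet_Ioc fun u hu => ?_
    rcases le_or_gt u s with h | h
    · have hmem1 : (s, u) ∈ S1 := ⟨hu.1, h⟩
      have hmem2 : (s, u) ∉ S2 := by
        rw [hS2]
        simp only [Set.mem_setOf_eq, not_and]
        intro _
        exact not_lt.2 h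
      rw [hF1, hF2]
      simp only [Set.indicator_of_mem hmem1, Set.indicator_of_notMem hmem2, add_zero]
      rw [hg]
      simp only [min_eq_right h, abs_of_nonneg (sub_nonneg.2 h), if_neg (not_lt.2 h)]
      ring_nf
    · have hmem1 : (s, u) ∉ S1 := by
        rw [hS1]
        simp only [Set.mem_setOf_eq, not_and]
        intro _
        exact not_le.2 h
      have hmem2 : (s, u) ∈ S2 := ⟨hs.1, h⟩
      rw [hF1, hF2]
      simp only [Set.indicator_of_mem hmem2, Set.indicator_of_notMem hmem1, zero_add]
      rw [hg]
      have habs : |s - u| = u - s := by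
        rw [abs_of_nonpos (by linarith)]; ring
      simp only [min_eq_left h.le, habs, if_pos h]
      ring_nf
  -- the Tonelli swap for F1
  have hswap : (∫ s, (∫ u, F1 (s, u) ∂μ) ∂μ) = ∫ u, (∫ s, F1 (s, u) ∂μ) ∂μ :=
    integral_integral_swap (f := fun s u => F1 (s, u)) hint1
  -- bound on the inner integral of F1 (in s, for fixed u)
  have hinner1 : ∀ u ∈ Set.Ioc (0:ℝ) T,
      (∫ s, F1 (s, u) ∂μ) ≤ Real.exp (-(u * a)) * ((T + 1) / (1 + c)) := by
    intro u hu
    have hfun : (fun s => F1 (s, u)) =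
        (Set.Ici u).indicator (fun s => Real.exp (-(u * a)) * Real.exp (-((s - u) * c))) := by
      funext s
      by_cases h : u ≤ s
      · rw [hF1, Set.indicator_of_mem (show (s, u) ∈ S1 from ⟨hu.1, h⟩),
          Set.indicator_of_mem (show s ∈ Set.Ici u from h), ← Real.exp_add]
        ring_nf
      · rw [hF1, Set.indicator_of_notMem (show (s, u) ∉ S1 from fun hp => h hp.2),
          Set.indicator_of_notMem (show s ∉ Set.Ici u from h)]
    rw [hfun, hμdef, setIntegral_indicator measurableSet_Ici]
    have hset : Set.Ioc (0:ℝ) T ∩ Set.Ici u = Set.Icc u T := by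
      ext x
      simp only [Set.mem_inter_iff, Set.mem_Ioc, Set.mem_Ici, Set.mem_Icc]
      constructor
      · rintro ⟨⟨_, h2⟩, h3⟩; exact ⟨h3, h2⟩
      · rintro ⟨h1, h2⟩; exact ⟨⟨lt_of_lt_of_le hu.1 h1, h2⟩, h1⟩
    rw [hset, integral_Icc_eq_integral_Ioc, integral_const_mul]
    exact mul_le_mul_of_nonneg_left
      (expInt_le T c u T hT hc0 hu.2 (by linarith [hu.1])) (Real.exp_pos _).le
  -- bound on the inner integral of F2 (in u, for fixed s)
  have hinner2 : ∀ s ∈ Set.Ioc (0:ℝ) T,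
      (∫ u, F2 (s, u) ∂μ) ≤ Real.exp (-(s * a)) * ((T + 1) / (1 + b)) := by
    intro s hs
    have hfun : (fun u => F2 (s, u)) =
        (Set.Ioi s).indicator (fun u => Real.exp (-(s * a)) * Real.exp (-((u - s) * b))) := by
      funext u
      by_cases h : s < u
      · rw [hF2, Set.indicator_of_mem (show (s, u) ∈ S2 from ⟨hs.1, h⟩),
          Set.indicator_of_mem (show u ∈ Set.Ioi s from h), ← Real.exp_add]
        ring_nf
      · rw [hF2, Set.indicator_of_notMem (show (s, u) ∉ S2 from fun hp => h hp.2),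
          Set.indicator_of_notMem (show u ∉ Set.Ioi s from h)]
    rw [hfun, hμdef, setIntegral_indicator measurableSet_Ioi]
    have hset : Set.Ioc (0:ℝ) T ∩ Set.Ioi s = Set.Ioc s T := by
      ext x
      simp only [Set.mem_inter_iff, Set.mem_Ioc, Set.mem_Ioi]
      constructor
      · rintro ⟨⟨_, h2⟩, h3⟩; exact ⟨h3, h2⟩
      · rintro ⟨h1, h2⟩; exact ⟨⟨lt_trans hs.1 h1, h2⟩, h1⟩
    rw [hset, integral_const_mul]
    exact mul_le_mul_of_nonneg_left
      (expInt_le T b s T hT hb0 hs.2 (by linarith [hs.1])) (Real.exp_pos _).le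
  -- integrability of the comparison function
  have hcomp_int : ∀ r : ℝ, 0 ≤ r →
      Integrable (fun t => Real.exp (-(t * a)) * r) μ := by
    intro r hr
    exact ((Real.continuous_exp.comp (by continuity)).mul continuous_const).integrableOn_Ioc
  -- the basic exponential integral bound
  have hbase : (∫ t, Real.exp (-(t * a)) ∂μ) ≤ (T + 1) / (1 + a) := by
    have h := expInt_le T a 0 T hT ha0 hT.le (by linarith)
    rw [hμdef]
    simpa using h
  have hA : (∫ s, (∫ u, F1 (s, u) ∂μ) ∂μ) ≤ ((T + 1) / (1 + a)) * ((T + 1) / (1 + c)) := by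
    rw [hswap]
    calc (∫ u, (∫ s, F1 (s, u) ∂μ) ∂μ)
        ≤ ∫ u, Real.exp (-(u * a)) * ((T + 1) / (1 + c)) ∂μ := by
          refine integral_mono_of_nonneg
            (Filter.Eventually.of_forall fun u => integral_nonneg fun s => hF1nn _)
            (hcomp_int _ (by positivity)) ?_
          rw [hμdef]
          exact (ae_restrict_iff' measurableSet_Ioc).2 (Filter.Eventually.of_forall hinner1)
      _ = (∫ u, Real.exp (-(u * a)) ∂μ) * ((T + 1) / (1 + c)) := integral_mul_const _ _
      _ ≤ ((T + 1) / (1 + a)) * ((T + 1) / (1 + c)) :=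
          mul_le_mul_of_nonneg_right hbase (by positivity)
  have hB : (∫ s, (∫ u, F2 (s, u) ∂μ) ∂μ) ≤ ((T + 1) / (1 + a)) * ((T + 1) / (1 + b)) := by
    calc (∫ s, (∫ u, F2 (s, u) ∂μ) ∂μ)
        ≤ ∫ s, Real.exp (-(s * a)) * ((T + 1) / (1 + b)) ∂μ := by
          refine integral_mono_of_nonneg
            (Filter.Eventually.of_forall fun s => integral_nonneg fun u => hF2nn _)
            (hcomp_int _ (by positivity)) ?_
          rw [hμdef]
          exact (ae_restrict_iff' measurableSet_Ioc).2 (Filter.Eventually.of_forall hinner2)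
      _ = (∫ s, Real.exp (-(s * a)) ∂μ) * ((T + 1) / (1 + b)) := integral_mul_const _ _
      _ ≤ ((T + 1) / (1 + a)) * ((T + 1) / (1 + b)) :=
          mul_le_mul_of_nonneg_right hbase (by positivity)
  -- put everything together
  have hmain : (∫ s, (∫ u, g s u ∂μ) ∂μ)
      = (∫ s, (∫ u, F1 (s, u) ∂μ) ∂μ) + ∫ s, (∫ u, F2 (s, u) ∂μ) ∂μ := by
    rw [← integral_add hA_int hB_int]
    exact setIntegral_congr_fun measurableSet_Ioc hsplit
  calc (∫ s, (∫ u, g s u ∂μ) ∂μ)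
      ≤ ((T + 1) / (1 + a)) * ((T + 1) / (1 + c)) + ((T + 1) / (1 + a)) * ((T + 1) / (1 + b)) := by
        rw [hmain]; exact add_le_add hA hB
    _ = (T + 1) ^ 2 * (1 / (1 + a)) * (1 / (1 + c) + 1 / (1 + b)) := by
        have h1 : (1:ℝ) + a ≠ 0 := by positivity
        have h2 : (1:ℝ) + b ≠ 0 := by positivity
        have h3 : (1:ℝ) + c ≠ 0 := by positivity
        field_simp
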